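/- arXiv:2402.05562 — 3 statements merged into one kernel-verified Lean document; each statement's English description precedes it below -/
import Mathlib

section
/- Let A be an invertible real n×n matrix, V, W real n×m matrices with WᵀAV invertible, and Ψ a symmetric positive semidefinite real n×n matrix with WᵀAΨ = 0. Set Σ₀ = VVᵀ + Ψ. Then for all vectors x₀, b ∈ ℝⁿ, the Bayesian posterior mean x₀ + Σ₀AᵀW(WᵀAΣ₀AᵀW)⁻¹Wᵀ(b − Ax₀) equals the projection-method approximation x₀ + V(WᵀAV)⁻¹Wᵀ(b − Ax₀). -/
open Matrix

/-- With `Σ₀ = VVᵀ + Ψ`, the Bayesian posterior mean equals the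
projection-method approximation `x₀ + V(WᵀAV)⁻¹Wᵀ(b − Ax₀)`. -/
theorem stmt_1 {n m : ℕ} (A : Matrix (Fin n) (Fin n) ℝ)
    (V W : Matrix (Fin n) (Fin m) ℝ) (Ψ : Matrix (Fin n) (Fin n) ℝ)
    (hA : IsUnit A) (hWAV : IsUnit (Wᵀ * A * V)) (hΨ : Ψ.PosSemidef)
    (hWAΨ : Wᵀ * A * Ψ = 0) :
    ∀ x₀ b : Fin n → ℝ,
      x₀ + ((V * Vᵀ + Ψ) * Aᵀ * W * (Wᵀ * A * (V * Vᵀ + Ψ) * Aᵀ * W)⁻¹ * Wᵀ) *ᵥ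
          (b - A *ᵥ x₀)
        = x₀ + (V * (Wᵀ * A * V)⁻¹ * Wᵀ) *ᵥ (b - A *ᵥ x₀) := by
  intro x₀ b
  have hΨsym : Ψᵀ = Ψ := hΨ.1
  have hΨAW : Ψ * Aᵀ * W = 0 := by
    have := congrArg Matrix.transpose hWAΨ
    simpa [Matrix.transpose_mul, hΨsym, Matrix.mul_assoc] using this
  set M := Wᵀ * A * V with hM
  have h1 : (V * Vᵀ + Ψ) * Aᵀ * W = V * Mᵀ := by
    rw [Matrix.add_mul, Matrix.add_mul, hΨAW, add_zero, hM]
    simp [Matrix.transpose_mul, Matrix.mul_assoc]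
  have h2 : Wᵀ * A * (V * Vᵀ + Ψ) * Aᵀ * W = M * Mᵀ := by
    have : Wᵀ * A * (V * Vᵀ + Ψ) = M * Vᵀ := by
      rw [Matrix.mul_add, hWAΨ, add_zero, hM]
      simp [Matrix.mul_assoc]
    rw [this, hM]
    simp [Matrix.transpose_mul, Matrix.mul_assoc]
  have hMT : IsUnit Mᵀ := (Matrix.isUnit_transpose M).mpr hWAV
  have h3 : (M * Mᵀ)⁻¹ = Mᵀ⁻¹ * M⁻¹ := Matrix.mul_inv_rev M Mᵀ
  rw [h1, h2, h3]
  have h4 : V * Mᵀ * (Mᵀ⁻¹ * M⁻¹) = V * M⁻¹ := by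
    rw [Matrix.mul_assoc, ← Matrix.mul_assoc Mᵀ,
      Matrix.mul_nonsing_inv _ ((Matrix.isUnit_iff_isUnit_det _).mp hMT),
      Matrix.one_mul]
  rw [h4, Matrix.mul_assoc]
end

section
/- Let A be an invertible real n×n matrix, V, W real n×m matrices with WᵀAV invertible, and Ψ a symmetric positive semidefinite real n×n matrix with WᵀAΨ = 0. Set Σ₀ = VVᵀ + Ψ. Then the Bayesian posterior covariance Σ₀ − Σ₀AᵀW(WᵀAΣ₀AᵀW)⁻¹WᵀAΣ₀ equals Ψ. -/
open Matrix

/-- With `Σ₀ = VVᵀ + Ψ`, the Bayesian posterior covariance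
`Σ₀ − Σ₀AᵀW(WᵀAΣ₀AᵀW)⁻¹WᵀAΣ₀` equals `Ψ`. -/
theorem stmt_2 {n m : ℕ} (A : Matrix (Fin n) (Fin n) ℝ)
    (V W : Matrix (Fin n) (Fin m) ℝ) (Ψ : Matrix (Fin n) (Fin n) ℝ)
    (hA : IsUnit A) (hWAV : IsUnit (Wᵀ * A * V)) (hΨ : Ψ.PosSemidef)
    (hWAΨ : Wᵀ * A * Ψ = 0) :
    (V * Vᵀ + Ψ) -
        (V * Vᵀ + Ψ) * Aᵀ * W * (Wᵀ * A * (V * Vᵀ + Ψ) * Aᵀ * W)⁻¹ * Wᵀ * A * (V * Vᵀ + Ψ)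
      = Ψ := by
  set M := Wᵀ * A * V with hM
  have hΨsym : Ψᵀ = Ψ := by
    have := hΨ.1
    simpa [Matrix.IsHermitian] using this
  have h1 : Ψ * (Aᵀ * W) = 0 := by
    have := congrArg Matrix.transpose hWAΨ
    simpa [Matrix.transpose_mul, hΨsym, Matrix.mul_assoc] using this
  have hMdet : IsUnit M.det := (Matrix.isUnit_iff_isUnit_det M).mp hWAV
  have hMtdet : IsUnit Mᵀ.det := by simpa [Matrix.det_transpose] using hMdet
  have hleft : (V * Vᵀ + Ψ) * Aᵀ * W = V * Mᵀ := by
    rw [Matrix.add_mul, Matrix.add_mul, Matrix.mul_assoc Ψ, h1]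
    simp [hM, Matrix.transpose_mul, Matrix.mul_assoc]
  have hright : Wᵀ * A * (V * Vᵀ + Ψ) = M * Vᵀ := by
    rw [Matrix.mul_add, hWAΨ]
    simp [hM, Matrix.mul_assoc]
  have hmid : Wᵀ * A * (V * Vᵀ + Ψ) * Aᵀ * W = M * Mᵀ := by
    rw [show Wᵀ * A * (V * Vᵀ + Ψ) * Aᵀ * W = (M * Vᵀ) * Aᵀ * W by rw [hright]]
    simp [hM, Matrix.transpose_mul, Matrix.mul_assoc]
  have e1 : Mᵀ * Mᵀ⁻¹ = 1 := Matrix.mul_nonsing_inv _ hMtdet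
  have e2 : M⁻¹ * M = 1 := Matrix.nonsing_inv_mul _ hMdet
  have hright' : Wᵀ * (A * (V * Vᵀ + Ψ)) = M * Vᵀ := by
    simpa [Matrix.mul_assoc] using hright
  have key : V * Mᵀ * (Mᵀ⁻¹ * M⁻¹) * Wᵀ * A * (V * Vᵀ + Ψ) = V * Vᵀ := by
    calc V * Mᵀ * (Mᵀ⁻¹ * M⁻¹) * Wᵀ * A * (V * Vᵀ + Ψ)
        = V * (Mᵀ * (Mᵀ⁻¹ * (M⁻¹ * (Wᵀ * (A * (V * Vᵀ + Ψ)))))) := by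
          simp only [Matrix.mul_assoc]
      _ = V * (Mᵀ * (Mᵀ⁻¹ * (M⁻¹ * (M * Vᵀ)))) := by rw [hright']
      _ = V * Vᵀ := by
          rw [← Matrix.mul_assoc M⁻¹ M, e2, Matrix.one_mul,
            ← Matrix.mul_assoc Mᵀ, e1, Matrix.one_mul]
  rw [hmid, Matrix.mul_inv_rev, hleft, key]
  abel
end

section
/- Let A be a symmetric positive definite real n×n matrix, u₁, …, u_K ∈ ℝⁿ (K ≤ n) vectors with uⱼᵀAu_k = δ_{jk}, d₁ ≥ d₂ ≥ … ≥ d_K > 0, B = Σ_{j=1}^{K} dⱼ uⱼuⱼᵀ, and for m < K let B_m = Σ_{j=1}^{m} dⱼ uⱼuⱼᵀ. Then B_m is an optimal rank-m approximation to B in the norm ‖·‖_{A,A⁻¹}: (i) ‖B − B_m‖_{A,A⁻¹} = d_{m+1}, i.e. ‖(B − B_m)x‖_A ≤ d_{m+1}‖x‖_{A⁻¹} for all x with equality for some x ≠ 0; and (ii) for every real n×n matrix C with rank(C) ≤ m, there exists x ≠ 0 with ‖(B − C)x‖_A ≥ d_{m+1}‖x‖_{A⁻¹}, so ‖B − C‖_{A,A⁻¹}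 ≥ d_{m+1}. -/
open Matrix

private lemma aux_vmv {n : ℕ} (w v x : Fin n → ℝ) :
    vecMulVec w v *ᵥ x = (v ⬝ᵥ x) • w := by
  ext i
  simp only [vecMulVec, mulVec, dotProduct, of_apply, Pi.smul_apply, smul_eq_mul,
    Finset.sum_mul]
  exact Finset.sum_congr rfl fun k _ => by ring

private lemma aux_smv {n : ℕ} {α : Type*} (M : α → Matrix (Fin n) (Fin n) ℝ)
    (s : Finset α) (x : Fin n → ℝ) :
    (∑ j ∈ s, M j) *ᵥ x = ∑ j ∈ s, M j *ᵥ x := by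
  ext i
  simp only [mulVec, dotProduct, Finset.sum_apply, Matrix.sum_apply, Finset.sum_mul]
  exact Finset.sum_comm

private lemma aux_mvs {n : ℕ} {α : Type*} (M : Matrix (Fin n) (Fin n) ℝ)
    (f : α → Fin n → ℝ) (s : Finset α) :
    M *ᵥ (∑ j ∈ s, f j) = ∑ j ∈ s, M *ᵥ f j := by
  ext i
  simp only [mulVec, dotProduct, Finset.sum_apply, Finset.mul_sum]
  exact Finset.sum_comm

private lemma aux_dps {n : ℕ} {α : Type*} (x : Fin n → ℝ) (f : α → Fin n → ℝ) (s : Finset α) :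
    x ⬝ᵥ (∑ j ∈ s, f j) = ∑ j ∈ s, x ⬝ᵥ f j := by
  simp only [dotProduct, Finset.sum_apply, Finset.mul_sum]
  exact Finset.sum_comm

private lemma aux_spd {n : ℕ} {α : Type*} (x : Fin n → ℝ) (f : α → Fin n → ℝ) (s : Finset α) :
    (∑ j ∈ s, f j) ⬝ᵥ x = ∑ j ∈ s, f j ⬝ᵥ x := by
  simp only [dotProduct, Finset.sum_apply, Finset.sum_mul]
  exact Finset.sum_comm

private lemma aux_sumnorm {n : ℕ} (M : Matrix (Fin n) (Fin n) ℝ)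
    {α : Type*} [DecidableEq α] (w : α → Fin n → ℝ)
    (hw : ∀ j k, w j ⬝ᵥ (M *ᵥ w k) = if j = k then 1 else 0)
    (s : Finset α) (e : α → ℝ) :
    (∑ j ∈ s, e j • w j) ⬝ᵥ (M *ᵥ (∑ j ∈ s, e j • w j)) = ∑ j ∈ s, (e j)^2 := by
  rw [aux_mvs, aux_spd]
  have : ∀ j ∈ s, (e j • w j) ⬝ᵥ ∑ k ∈ s, M *ᵥ (e k • w k) = (e j)^2 := by
    intro j hj
    rw [aux_dps]
    have : ∀ k ∈ s, (e j • w j) ⬝ᵥ (M *ᵥ (e k • w k)) = e j * e k * if j = k then 1 else 0 := by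
      intro k _
      rw [mulVec_smul, smul_dotProduct, dotProduct_smul, hw]
      simp [mul_assoc]
    rw [Finset.sum_congr rfl this, Finset.sum_eq_single j]
    · simp [pow_two]
    · intro k _ hk; simp [Ne.symm hk]
    · intro h; exact absurd hj h
  exact Finset.sum_congr rfl this

private lemma aux_symm_dot {n : ℕ} (M : Matrix (Fin n) (Fin n) ℝ) (hM : Mᵀ = M)
    (x y : Fin n → ℝ) : x ⬝ᵥ (M *ᵥ y) = y ⬝ᵥ (M *ᵥ x) := by
  rw [dotProduct_mulVec, ← mulVec_transpose, hM, dotProduct_comm]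
/-- With `B = Σ_{j=1}^{K} dⱼuⱼuⱼᵀ` and `B_m = Σ_{j=1}^{m} dⱼuⱼuⱼᵀ`
(`m < K`), `B_m` is an optimal rank-`m` approximation to `B` in `‖·‖_{A,A⁻¹}`:
(i) `‖B − B_m‖_{A,A⁻¹} = d_{m+1}` (the bound holds for all `x` and is attained), and
(ii) for any `C` of rank ≤ `m` there is `x ≠ 0` with
`‖(B − C)x‖_A ≥ d_{m+1}‖x‖_{A⁻¹}`. -/
theorem stmt_18 {n K : ℕ} (hKn : K ≤ n)
    (A : Matrix (Fin n) (Fin n) ℝ) (hA : A.PosDef)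
    (u : Fin K → Fin n → ℝ)
    (horth : ∀ j k : Fin K, u j ⬝ᵥ (A *ᵥ u k) = if j = k then 1 else 0)
    (d : Fin K → ℝ) (hd : ∀ i j : Fin K, i ≤ j → d j ≤ d i) (hdpos : ∀ j, 0 < d j)
    (m : ℕ) (hm : m < K)
    (B Bm : Matrix (Fin n) (Fin n) ℝ)
    (hB : B = ∑ j : Fin K, d j • vecMulVec (u j) (u j))
    (hBm : Bm = ∑ j ∈ Finset.univ.filter (fun j : Fin K => (j : ℕ) < m),
        d j • vecMulVec (u j) (u j)) :
    ((∀ x : Fin n → ℝ,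
        Real.sqrt (((B - Bm) *ᵥ x) ⬝ᵥ (A *ᵥ ((B - Bm) *ᵥ x))) ≤
          d ⟨m, hm⟩ * Real.sqrt (x ⬝ᵥ (A⁻¹ *ᵥ x))) ∧
      ∃ x : Fin n → ℝ, x ≠ 0 ∧
        Real.sqrt (((B - Bm) *ᵥ x) ⬝ᵥ (A *ᵥ ((B - Bm) *ᵥ x))) =
          d ⟨m, hm⟩ * Real.sqrt (x ⬝ᵥ (A⁻¹ *ᵥ x))) ∧
    ∀ C : Matrix (Fin n) (Fin n) ℝ, C.rank ≤ m →
      ∃ x : Fin n → ℝ, x ≠ 0 ∧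
        d ⟨m, hm⟩ * Real.sqrt (x ⬝ᵥ (A⁻¹ *ᵥ x)) ≤
          Real.sqrt (((B - C) *ᵥ x) ⬝ᵥ (A *ᵥ ((B - C) *ᵥ x))) := by
  set m₀ : Fin K := ⟨m, hm⟩ with hm₀
  set v : Fin K → Fin n → ℝ := fun j => A *ᵥ u j with hv
  have hAinv_symm : (A⁻¹)ᵀ = A⁻¹ := by
    rw [← conjTranspose_eq_transpose_of_trivial]; exact hA.inv.1
  have hvinv : ∀ j, A⁻¹ *ᵥ v j = u j := by
    intro j
    show A⁻¹ *ᵥ (A *ᵥ u j) = u j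
    rw [mulVec_mulVec, nonsing_inv_mul A hA.det_pos.ne'.isUnit, one_mulVec]
  have huv : ∀ j k : Fin K, u j ⬝ᵥ v k = if j = k then 1 else 0 := horth
  have hvorth : ∀ j k, v j ⬝ᵥ (A⁻¹ *ᵥ v k) = if j = k then 1 else 0 := by
    intro j k
    rw [hvinv k, dotProduct_comm, horth k j]
    simp only [eq_comm]
  -- Bessel inequality
  have hbessel : ∀ x : Fin n → ℝ,
      ∑ j : Fin K, (u j ⬝ᵥ x) ^ 2 ≤ x ⬝ᵥ (A⁻¹ *ᵥ x) := by
    intro x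
    set sK : Fin n → ℝ := ∑ j : Fin K, (u j ⬝ᵥ x) • v j with hsK
    have h1 : x ⬝ᵥ (A⁻¹ *ᵥ sK) = ∑ j : Fin K, (u j ⬝ᵥ x) ^ 2 := by
      rw [hsK, aux_mvs, aux_dps]
      refine Finset.sum_congr rfl fun j _ => ?_
      rw [mulVec_smul, hvinv j, dotProduct_smul, smul_eq_mul, dotProduct_comm]
      ring
    have h2 : sK ⬝ᵥ (A⁻¹ *ᵥ x) = ∑ j : Fin K, (u j ⬝ᵥ x) ^ 2 := by
      rw [aux_symm_dot _ hAinv_symm]; exact h1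
    have h3 : sK ⬝ᵥ (A⁻¹ *ᵥ sK) = ∑ j : Fin K, (u j ⬝ᵥ x) ^ 2 :=
      aux_sumnorm A⁻¹ v hvorth Finset.univ _
    have h0 : 0 ≤ (x - sK) ⬝ᵥ (A⁻¹ *ᵥ (x - sK)) := by
      rcases eq_or_ne (x - sK) 0 with h | h
      · simp [h]
      · have := hA.inv.dotProduct_mulVec_pos h
        simpa using this.le
    have hexp : (x - sK) ⬝ᵥ (A⁻¹ *ᵥ (x - sK))
        = x ⬝ᵥ (A⁻¹ *ᵥ x) - ∑ j : Fin K, (u j ⬝ᵥ x) ^ 2 := by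
      rw [mulVec_sub, sub_dotProduct, dotProduct_sub, dotProduct_sub, h1, h2, h3]
      ring
    linarith [hexp ▸ h0]
  -- Part (i)
  set t : Finset (Fin K) := Finset.univ.filter (fun j : Fin K => ¬ (j : ℕ) < m) with ht
  have hBmB : B - Bm = ∑ j ∈ t, d j • vecMulVec (u j) (u j) := by
    rw [hB, hBm, ht,
      ← Finset.sum_filter_add_sum_filter_not Finset.univ (fun j : Fin K => (j : ℕ) < m)
        (fun j => d j • vecMulVec (u j) (u j))]
    exact add_sub_cancel_left _ _
  have hmv : ∀ x : Fin n → ℝ,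
      (B - Bm) *ᵥ x = ∑ j ∈ t, (d j * (u j ⬝ᵥ x)) • u j := by
    intro x
    rw [hBmB, aux_smv]
    refine Finset.sum_congr rfl fun j _ => ?_
    rw [smul_mulVec, aux_vmv, smul_smul]
  have hnorm : ∀ x : Fin n → ℝ,
      ((B - Bm) *ᵥ x) ⬝ᵥ (A *ᵥ ((B - Bm) *ᵥ x)) = ∑ j ∈ t, (d j * (u j ⬝ᵥ x)) ^ 2 := by
    intro x
    rw [hmv x]
    exact aux_sumnorm A u horth t _
  have hdm : ∀ j ∈ t, d j ≤ d m₀ := by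
    intro j hj
    refine hd m₀ j ?_
    rw [Fin.le_def]
    have := (Finset.mem_filter.1 hj).2
    simpa [hm₀] using Nat.le_of_not_lt this
  have hbound : ∀ x : Fin n → ℝ,
      ∑ j ∈ t, (d j * (u j ⬝ᵥ x)) ^ 2 ≤ (d m₀) ^ 2 * (x ⬝ᵥ (A⁻¹ *ᵥ x)) := by
    intro x
    have step1 : ∑ j ∈ t, (d j * (u j ⬝ᵥ x)) ^ 2 ≤ ∑ j ∈ t, (d m₀) ^ 2 * (u j ⬝ᵥ x) ^ 2 := by
      refine Finset.sum_le_sum fun j hj => ?_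
      have h1 := hdm j hj
      have h2 := hdpos j
      have h3 : (d j) ^ 2 ≤ (d m₀) ^ 2 := by nlinarith
      rw [mul_pow]
      exact mul_le_mul_of_nonneg_right h3 (sq_nonneg _)
    have step2 : ∑ j ∈ t, (d m₀) ^ 2 * (u j ⬝ᵥ x) ^ 2
        ≤ ∑ j : Fin K, (d m₀) ^ 2 * (u j ⬝ᵥ x) ^ 2 := by
      refine Finset.sum_le_sum_of_subset_of_nonneg (Finset.subset_univ t) fun j _ _ => ?_
      positivity
    have step3 : ∑ j : Fin K, (d m₀) ^ 2 * (u j ⬝ᵥ x) ^ 2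
        ≤ (d m₀) ^ 2 * (x ⬝ᵥ (A⁻¹ *ᵥ x)) := by
      rw [← Finset.mul_sum]
      exact mul_le_mul_of_nonneg_left (hbessel x) (sq_nonneg _)
    linarith
  have sqrt_bound : ∀ x : Fin n → ℝ,
      Real.sqrt (((B - Bm) *ᵥ x) ⬝ᵥ (A *ᵥ ((B - Bm) *ᵥ x)))
        ≤ d m₀ * Real.sqrt (x ⬝ᵥ (A⁻¹ *ᵥ x)) := by
    intro x
    rw [hnorm x]
    calc Real.sqrt (∑ j ∈ t, (d j * (u j ⬝ᵥ x)) ^ 2)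
        ≤ Real.sqrt ((d m₀) ^ 2 * (x ⬝ᵥ (A⁻¹ *ᵥ x))) := Real.sqrt_le_sqrt (hbound x)
      _ = d m₀ * Real.sqrt (x ⬝ᵥ (A⁻¹ *ᵥ x)) := by
          rw [Real.sqrt_mul (sq_nonneg _), Real.sqrt_sq (hdpos m₀).le]
  refine ⟨⟨sqrt_bound, ?_⟩, ?_⟩
  · -- equality witness : x = v m₀
    refine ⟨v m₀, ?_, ?_⟩
    · intro h
      have h1 := huv m₀ m₀
      rw [h, dotProduct_zero] at h1
      simp at h1
    · have hm₀t : m₀ ∈ t := by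
        simp [ht, hm₀]
      have hsum : ∑ j ∈ t, (d j * (u j ⬝ᵥ v m₀)) ^ 2 = (d m₀) ^ 2 := by
        rw [Finset.sum_eq_single m₀]
        · rw [huv m₀ m₀]; simp
        · intro j _ hj
          rw [huv j m₀, if_neg hj]
          ring
        · intro h; exact absurd hm₀t h
      rw [hnorm (v m₀), hsum, hvorth m₀ m₀, if_pos rfl, Real.sqrt_one,
        Real.sqrt_sq (hdpos m₀).le, mul_one]
  · -- Part (ii)
    intro C hC
    have hι' : ∀ i : Fin (m + 1), (i : ℕ) < K := fun i =>
      lt_of_le_of_lt (Nat.lt_succ_iff.mp i.2) hm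
    set ι : Fin (m + 1) → Fin K := fun i => ⟨i, hι' i⟩ with hιdef
    have hι : Function.Injective ι := by
      intro a b h
      have h2 : (ι a).val = (ι b).val := congrArg Fin.val h
      exact Fin.ext h2
    set S : (Fin (m + 1) → ℝ) →ₗ[ℝ] (Fin n → ℝ) :=
      { toFun := fun c => ∑ i : Fin (m + 1), c i • v (ι i)
        map_add' := by
          intro a b
          simp [add_smul, Finset.sum_add_distrib]
        map_smul' := by
          intro r a
          simp [Finset.smul_sum, smul_smul] } with hS
    have hSapp : ∀ c : Fin (m + 1) → ℝ, S c = ∑ i : Fin (m + 1), c i • v (ι i) := fun c => rfl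
    have hker : ∃ c : Fin (m + 1) → ℝ, c ≠ 0 ∧ C *ᵥ S c = 0 := by
      by_contra hcon
      push_neg at hcon
      set L : (Fin (m + 1) → ℝ) →ₗ[ℝ] (Fin n → ℝ) := C.mulVecLin.comp S with hL
      have hinj : Function.Injective L := by
        rw [← LinearMap.ker_eq_bot, LinearMap.ker_eq_bot']
        intro c hc
        by_contra h
        exact hcon c h (by simpa [hL] using hc)
      have h1 : Module.finrank ℝ (LinearMap.range L) = m + 1 := by
        rw [LinearMap.finrank_range_of_inj hinj, Module.finrank_fin_fun]
      have h2 : LinearMap.range L ≤ LinearMap.range C.mulVecLin :=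
        LinearMap.range_comp_le_range _ _
      have h3 := Submodule.finrank_mono h2
      rw [h1] at h3
      have h4 : m + 1 ≤ C.rank := h3
      omega
    obtain ⟨c, hc0, hCx⟩ := hker
    have hux : ∀ j : Fin K, u j ⬝ᵥ S c = ∑ i : Fin (m + 1), c i * (if j = ι i then 1 else 0) := by
      intro j
      rw [hSapp, aux_dps]
      refine Finset.sum_congr rfl fun i _ => ?_
      rw [dotProduct_smul, huv j (ι i), smul_eq_mul]
    have hux' : ∀ i : Fin (m + 1), u (ι i) ⬝ᵥ S c = c i := by
      intro i
      rw [hux (ι i), Finset.sum_eq_single i]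
      · simp
      · intro i' _ hi'
        rw [if_neg (fun h => hi' (hι h.symm))]
        ring
      · simp
    refine ⟨S c, ?_, ?_⟩
    · intro h
      apply hc0
      funext i
      have := hux' i
      rw [h, dotProduct_zero] at this
      exact this.symm
    · have hBC : (B - C) *ᵥ S c = B *ᵥ S c := by
        rw [sub_mulVec, hCx, sub_zero]
      have hBv : ∀ k, B *ᵥ v k = d k • u k := by
        intro k
        rw [hB, aux_smv]
        rw [Finset.sum_eq_single k]
        · rw [smul_mulVec, aux_vmv, huv k k, if_pos rfl, one_smul]
        · intro j _ hj
          rw [smul_mulVec, aux_vmv, huv j k, if_neg hj, zero_smul, smul_zero]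
        · simp
      have hBx : B *ᵥ S c = ∑ i : Fin (m + 1), (c i * d (ι i)) • u (ι i) := by
        rw [hSapp, aux_mvs]
        refine Finset.sum_congr rfl fun i _ => ?_
        rw [mulVec_smul, hBv (ι i), smul_smul]
      have horthι : ∀ i i' : Fin (m + 1),
          u (ι i) ⬝ᵥ (A *ᵥ u (ι i')) = if i = i' then 1 else 0 := by
        intro i i'
        rw [horth]
        by_cases h : i = i'
        · simp [h]
        · rw [if_neg (fun hh => h (hι hh)), if_neg h]
      have hvorthι : ∀ i i' : Fin (m + 1),
          v (ι i) ⬝ᵥ (A⁻¹ *ᵥ v (ι i')) = if i = i' then 1 else 0 := by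
        intro i i'
        rw [hvorth]
        by_cases h : i = i'
        · simp [h]
        · rw [if_neg (fun hh => h (hι hh)), if_neg h]
      have hxAx : S c ⬝ᵥ (A⁻¹ *ᵥ S c) = ∑ i : Fin (m + 1), (c i) ^ 2 := by
        rw [hSapp]
        exact aux_sumnorm A⁻¹ (fun i => v (ι i)) hvorthι Finset.univ _
      have hBnorm : (B *ᵥ S c) ⬝ᵥ (A *ᵥ (B *ᵥ S c))
          = ∑ i : Fin (m + 1), (c i * d (ι i)) ^ 2 := by
        rw [hBx]
        exact aux_sumnorm A (fun i => u (ι i)) horthι Finset.univ _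
      have hdι : ∀ i : Fin (m + 1), d m₀ ≤ d (ι i) := by
        intro i
        refine hd (ι i) m₀ ?_
        rw [Fin.le_def]
        simpa [hιdef, hm₀] using Nat.lt_succ_iff.mp i.2
      have hge : (d m₀) ^ 2 * (S c ⬝ᵥ (A⁻¹ *ᵥ S c))
          ≤ (B *ᵥ S c) ⬝ᵥ (A *ᵥ (B *ᵥ S c)) := by
        rw [hxAx, hBnorm, Finset.mul_sum]
        refine Finset.sum_le_sum fun i _ => ?_
        have h1 := hdι i
        have h2 := hdpos m₀
        have h3 : (d m₀) ^ 2 ≤ (d (ι i)) ^ 2 := by nlinarith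
        rw [mul_pow, mul_comm ((c i) ^ 2)]
        exact mul_le_mul_of_nonneg_right h3 (sq_nonneg _)
      rw [hBC]
      calc d m₀ * Real.sqrt (S c ⬝ᵥ (A⁻¹ *ᵥ S c))
          = Real.sqrt ((d m₀) ^ 2 * (S c ⬝ᵥ (A⁻¹ *ᵥ S c))) := by
            rw [Real.sqrt_mul (sq_nonneg _), Real.sqrt_sq (hdpos m₀).le]
        _ ≤ Real.sqrt ((B *ᵥ S c) ⬝ᵥ (A *ᵥ (B *ᵥ S c))) := Real.sqrt_le_sqrt hge
end
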